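/- Let k be a field of characteristic different from 2 containing an element i with i² = −1, and let a, b ∈ k. Let L/k be a field extension containing elements α, β with α² = a and β² = b such that L = k(α, β) and [L : k] = 4. Assume that the quadratic form x² + a·y² − b·z² is anisotropic over k, i.e., the only solution of x² + a·y² − b·z² = 0 with x, y, z ∈ k is x = y = z = 0. Then the image of i in L is a norm-one element (N_{L/k}(i) = 1) whose class in ᴺL^× / I_G L^× is nontrivial; that is, i does not lie in the subgroup of L^× generated by the elements σ(x)/x with σ ∈ Gal(L/k) and x ∈ L^×. -/

import Mathlib

private lemma quad_aux {k : Type} [Field k] (a b : k)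
    (haniso : ∀ x y z : k, x ^ 2 + a * y ^ 2 - b * z ^ 2 = 0 → x = 0 ∧ y = 0 ∧ z = 0)
    (c0 c1 c2 c3 : k) (h : c0 ^ 2 + a * c1 ^ 2 - b * c2 ^ 2 - a * b * c3 ^ 2 = 0) :
    c0 = 0 ∧ c1 = 0 ∧ c2 = 0 ∧ c3 = 0 := by
  by_cases hw : c2 ^ 2 + a * c3 ^ 2 = 0
  · obtain ⟨h2, h3, -⟩ := haniso c2 c3 0 (by linear_combination hw)
    obtain ⟨h0, h1, -⟩ := haniso c0 c1 0 (by linear_combination h + b * hw)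
    exact ⟨h0, h1, h2, h3⟩
  · have := haniso (c0 * c2 - a * c1 * c3) (c0 * c3 + c1 * c2) (c2 ^ 2 + a * c3 ^ 2)
      (by linear_combination (c2 ^ 2 + a * c3 ^ 2) * h)
    exact absurd this.2.2 hw

private lemma rep_mul_aux {k L : Type} [Field k] [Field L] [Algebra k L] (a b : k) (α β : L)
    (hα : α ^ 2 = algebraMap k L a) (hβ : β ^ 2 = algebraMap k L b)
    (c0 c1 c2 c3 d0 d1 d2 d3 : k) :
    (algebraMap k L c0 + algebraMap k L c1 * α + algebraMap k L c2 * β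
        + algebraMap k L c3 * (α * β)) *
      (algebraMap k L d0 + algebraMap k L d1 * α + algebraMap k L d2 * β
        + algebraMap k L d3 * (α * β)) =
    algebraMap k L (c0 * d0 + a * (c1 * d1) + b * (c2 * d2) + a * b * (c3 * d3))
      + algebraMap k L (c0 * d1 + c1 * d0 + b * (c2 * d3 + c3 * d2)) * α
      + algebraMap k L (c0 * d2 + c2 * d0 + a * (c1 * d3 + c3 * d1)) * β
      + algebraMap k L (c0 * d3 + c3 * d0 + c1 * d2 + c2 * d1) * (α * β) := by
  simp only [map_add, map_mul]
  linear_combination (algebraMap k L c1 * algebraMap k L d1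
      + (algebraMap k L c1 * algebraMap k L d3 + algebraMap k L c3 * algebraMap k L d1) * β
      + algebraMap k L c3 * algebraMap k L d3 * β ^ 2) * hα
    + (algebraMap k L c2 * algebraMap k L d2
      + (algebraMap k L c2 * algebraMap k L d3 + algebraMap k L c3 * algebraMap k L d2) * α
      + algebraMap k L c3 * algebraMap k L d3 * algebraMap k L a) * hβ


private lemma constr_mul_aux {k L : Type} [Field k] [Field L] [Algebra k L]
    (a b : k) (α β : L) (hα : α ^ 2 = algebraMap k L a) (hβ : β ^ 2 = algebraMap k L b)
    (B : Module.Basis (Fin 4) k L) (hB : ⇑B = ![1, α, β, α * β])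
    (ε δ : k) (hε : ε ^ 2 = 1) (hδ : δ ^ 2 = 1) :
    ∀ x y : L, (B.constr k ![(1 : L), ε • α, δ • β, (ε * δ) • (α * β)]) (x * y)
      = (B.constr k ![(1 : L), ε • α, δ • β, (ε * δ) • (α * β)]) x *
        (B.constr k ![(1 : L), ε • α, δ • β, (ε * δ) • (α * β)]) y := by
  set T := B.constr k ![(1 : L), ε • α, δ • β, (ε * δ) • (α * β)] with hT
  have hBi : ∀ i : Fin 4, B i = ![(1 : L), α, β, α * β] i := fun i => congrFun hB i
  have hTv : ∀ i : Fin 4,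
      T (![(1 : L), α, β, α * β] i) = ![(1 : L), ε • α, δ • β, (ε * δ) • (α * β)] i := by
    intro i
    rw [← hBi i, hT]
    exact B.constr_basis k _ i
  have hT0 : T 1 = 1 := by simpa using hTv 0
  have hT1 : T α = ε • α := by simpa using hTv 1
  have hT2 : T β = δ • β := by simpa using hTv 2
  have hT3 : T (α * β) = (ε * δ) • (α * β) := by simpa using hTv 3
  have hTmap : ∀ c : k, T (algebraMap k L c) = algebraMap k L c := by
    intro c
    rw [Algebra.algebraMap_eq_smul_one, map_smul, hT0]
  have hTsm : ∀ (c : k) (z : L), T (algebraMap k L c * z) = algebraMap k L c * T z := by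
    intro c z
    rw [← Algebra.smul_def, map_smul, Algebra.smul_def]
  have q11 : α * α = algebraMap k L a := by rw [← hα]; ring
  have q22 : β * β = algebraMap k L b := by rw [← hβ]; ring
  have q33 : (α * β) * (α * β) = algebraMap k L (a * b) := by
    rw [map_mul, ← hα, ← hβ]; ring
  have q13 : α * (α * β) = algebraMap k L a * β := by rw [← hα]; ring
  have q31 : (α * β) * α = algebraMap k L a * β := by rw [← hα]; ring
  have q23 : β * (α * β) = algebraMap k L b * α := by rw [← hβ]; ring
  have q32 : (α * β) * β = algebraMap k L b * α := by rw [← hβ]; ring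
  have q21 : β * α = α * β := mul_comm β α
  rw [LinearMap.map_mul_iff]
  refine B.ext fun i => B.ext fun j => ?_
  simp only [LinearMap.compr₂_apply, LinearMap.compl₂_apply, LinearMap.mul_apply',
    LinearMap.comp_apply, hBi]
  fin_cases i <;> fin_cases j
  · show T ((1 : L) * (1 : L)) = T (1 : L) * T (1 : L)
    rw [one_mul, hT0, one_mul]
  · show T ((1 : L) * α) = T (1 : L) * T α
    rw [one_mul, hT0, one_mul]
  · show T ((1 : L) * β) = T (1 : L) * T β
    rw [one_mul, hT0, one_mul]
  · show T ((1 : L) * (α * β)) = T (1 : L) * T (α * β)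
    rw [one_mul, hT0, one_mul]
  · show T (α * (1 : L)) = T α * T (1 : L)
    rw [mul_one, hT0, mul_one]
  · show T (α * α) = T α * T α
    rw [q11, hTmap, hT1, smul_mul_smul_comm, q11, ← sq, hε, one_smul]
  · show T (α * β) = T α * T β
    rw [hT3, hT1, hT2, smul_mul_smul_comm]
  · show T (α * (α * β)) = T α * T (α * β)
    rw [q13, hTsm, hT2, hT1, hT3, smul_mul_smul_comm, q13,
      show ε * (ε * δ) = δ by linear_combination δ * hε, mul_smul_comm]
  · show T (β * (1 : L)) = T β * T (1 : L)
    rw [mul_one, hT0, mul_one]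
  · show T (β * α) = T β * T α
    rw [q21, hT3, hT2, hT1, smul_mul_smul_comm, q21, mul_comm δ ε]
  · show T (β * β) = T β * T β
    rw [q22, hTmap, hT2, smul_mul_smul_comm, q22, ← sq, hδ, one_smul]
  · show T (β * (α * β)) = T β * T (α * β)
    rw [q23, hTsm, hT1, hT2, hT3, smul_mul_smul_comm, q23,
      show δ * (ε * δ) = ε by linear_combination ε * hδ, mul_smul_comm]
  · show T ((α * β) * (1 : L)) = T (α * β) * T (1 : L)
    rw [mul_one, hT0, mul_one]
  · show T ((α * β) * α) = T (α * β) * T α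
    rw [q31, hTsm, hT2, hT3, hT1, smul_mul_smul_comm, q31,
      show ε * δ * ε = δ by linear_combination δ * hε, mul_smul_comm]
  · show T ((α * β) * β) = T (α * β) * T β
    rw [q32, hTsm, hT1, hT3, hT2, smul_mul_smul_comm, q32,
      show ε * δ * δ = ε by linear_combination ε * hδ, mul_smul_comm]
  · show T ((α * β) * (α * β)) = T (α * β) * T (α * β)
    rw [q33, hTmap, hT3, smul_mul_smul_comm, q33,
      show ε * δ * (ε * δ) = 1 by linear_combination δ ^ 2 * hε + hδ, one_smul]




/-- Let `k` be a field of characteristic `≠ 2` containing `i` with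
`i² = -1`, and let `L = k(√a, √b)` with `[L : k] = 4`.  If the quadratic form
`x² + a y² - b z²` is anisotropic over `k`, then `i` (viewed in `L`) has norm `1` and
its class in `ᴺL^× / I_G L^×` is nontrivial, i.e. `i` does not lie in the subgroup of
`L^×` generated by the elements `σ(x)/x` for `σ ∈ Gal(L/k)` and `x ∈ L^×`. -/
theorem biquadratic_norm_one_nontrivial {k L : Type} [Field k] [Field L] [Algebra k L]
    [FiniteDimensional k L]
    (hchar : (2 : k) ≠ 0) (i : k) (hi : i ^ 2 = -1) (a b : k)
    (α β : L) (hα : α ^ 2 = algebraMap k L a) (hβ : β ^ 2 = algebraMap k L b)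
    (hgen : Algebra.adjoin k {α, β} = ⊤)
    (hdim : Module.finrank k L = 4)
    (haniso : ∀ x y z : k, x ^ 2 + a * y ^ 2 - b * z ^ 2 = 0 → x = 0 ∧ y = 0 ∧ z = 0) :
    Algebra.norm k (algebraMap k L i) = 1 ∧
    ∀ u : Lˣ, (u : L) = algebraMap k L i →
      u ∉ Subgroup.closure {w : Lˣ | ∃ (σ : L ≃ₐ[k] L) (x : Lˣ), (w : L) = σ x / x} := by
  have hinj : Function.Injective (algebraMap k L) := (algebraMap k L).injective
  constructor
  · rw [Algebra.norm_algebraMap, hdim, show i ^ 4 = (i ^ 2) ^ 2 by ring, hi, neg_one_sq]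
  intro u hu hmem
  -- every element of L is a k-combination of 1, α, β, α*β
  have halg : ∀ z : L, ∃ c0 c1 c2 c3 : k,
      z = algebraMap k L c0 + algebraMap k L c1 * α + algebraMap k L c2 * β
        + algebraMap k L c3 * (α * β) := by
    intro z
    have hz : z ∈ Algebra.adjoin k {α, β} := by rw [hgen]; trivial
    refine Algebra.adjoin_induction ?_ ?_ ?_ ?_ hz
    · rintro t (rfl | rfl)
      · exact ⟨0, 1, 0, 0, by simp⟩
      · exact ⟨0, 0, 1, 0, by simp⟩
    · intro r; exact ⟨r, 0, 0, 0, by simp⟩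
    · rintro x y - - ⟨c0, c1, c2, c3, hx⟩ ⟨d0, d1, d2, d3, hy⟩
      exact ⟨c0 + d0, c1 + d1, c2 + d2, c3 + d3, by rw [hx, hy]; simp only [map_add]; ring⟩
    · rintro x y - - ⟨c0, c1, c2, c3, hx⟩ ⟨d0, d1, d2, d3, hy⟩
      exact ⟨c0 * d0 + a * (c1 * d1) + b * (c2 * d2) + a * b * (c3 * d3),
        c0 * d1 + c1 * d0 + b * (c2 * d3 + c3 * d2),
        c0 * d2 + c2 * d0 + a * (c1 * d3 + c3 * d1),
        c0 * d3 + c3 * d0 + c1 * d2 + c2 * d1, by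
          rw [hx, hy, rep_mul_aux a b α β hα hβ]⟩
  have hspan : ⊤ ≤ Submodule.span k (Set.range ![(1 : L), α, β, α * β]) := by
    intro z _
    obtain ⟨c0, c1, c2, c3, rfl⟩ := halg z
    have m0 : (1 : L) ∈ Set.range ![(1 : L), α, β, α * β] := ⟨0, rfl⟩
    have m1 : α ∈ Set.range ![(1 : L), α, β, α * β] := ⟨1, rfl⟩
    have m2 : β ∈ Set.range ![(1 : L), α, β, α * β] := ⟨2, rfl⟩
    have m3 : α * β ∈ Set.range ![(1 : L), α, β, α * β] := ⟨3, rfl⟩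
    have sm : ∀ (c : k) (w : L), w ∈ Set.range ![(1 : L), α, β, α * β] →
        algebraMap k L c * w ∈ Submodule.span k (Set.range ![(1 : L), α, β, α * β]) := by
      intro c w hw
      rw [← Algebra.smul_def]
      exact Submodule.smul_mem _ _ (Submodule.subset_span hw)
    have h1 := sm c0 1 m0
    rw [mul_one] at h1
    exact Submodule.add_mem _ (Submodule.add_mem _ (Submodule.add_mem _ h1 (sm c1 α m1))
      (sm c2 β m2)) (sm c3 (α * β) m3)
  let B : Module.Basis (Fin 4) k L := basisOfTopLeSpanOfCardEqFinrank _ hspan (by rw [hdim]; simp)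
  have hB : ⇑B = ![(1 : L), α, β, α * β] := coe_basisOfTopLeSpanOfCardEqFinrank _ _ _
  set T : L →ₗ[k] L := B.constr k ![(1 : L), (1 : k) • α, (-1 : k) • β,
    ((1 : k) * (-1 : k)) • (α * β)] with hTdef
  set S : L →ₗ[k] L := B.constr k ![(1 : L), (-1 : k) • α, (1 : k) • β,
    ((-1 : k) * (1 : k)) • (α * β)] with hSdef
  have hTmul : ∀ x y : L, T (x * y) = T x * T y :=
    constr_mul_aux a b α β hα hβ B hB 1 (-1) (by ring) (by ring)
  have hSmul : ∀ x y : L, S (x * y) = S x * S y :=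
    constr_mul_aux a b α β hα hβ B hB (-1) 1 (by ring) (by ring)
  have hBi : ∀ i : Fin 4, B i = ![(1 : L), α, β, α * β] i := fun i => congrFun hB i
  have hT1 : T 1 = 1 := by
    have h := B.constr_basis k ![(1 : L), (1 : k) • α, (-1 : k) • β,
      ((1 : k) * (-1 : k)) • (α * β)] (0 : Fin 4)
    rw [hBi 0] at h
    simp only [Matrix.cons_val_zero] at h
    exact h
  have hTα : T α = α := by
    have h := B.constr_basis k ![(1 : L), (1 : k) • α, (-1 : k) • β,
      ((1 : k) * (-1 : k)) • (α * β)] (1 : Fin 4)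
    rw [hBi 1] at h
    simp only [Matrix.cons_val_one, Matrix.head_cons] at h
    exact h.trans (one_smul k α)
  have hTβ : T β = -β := by
    have h := B.constr_basis k ![(1 : L), (1 : k) • α, (-1 : k) • β,
      ((1 : k) * (-1 : k)) • (α * β)] (2 : Fin 4)
    rw [hBi 2] at h
    simp only [Matrix.cons_val_two, Matrix.tail_cons, Matrix.head_cons] at h
    exact h.trans (by rw [neg_smul, one_smul])
  have hS1 : S 1 = 1 := by
    have h := B.constr_basis k ![(1 : L), (-1 : k) • α, (1 : k) • β,
      ((-1 : k) * (1 : k)) • (α * β)] (0 : Fin 4)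
    rw [hBi 0] at h
    simp only [Matrix.cons_val_zero] at h
    exact h
  have hSα : S α = -α := by
    have h := B.constr_basis k ![(1 : L), (-1 : k) • α, (1 : k) • β,
      ((-1 : k) * (1 : k)) • (α * β)] (1 : Fin 4)
    rw [hBi 1] at h
    simp only [Matrix.cons_val_one, Matrix.head_cons] at h
    exact h.trans (by rw [neg_smul, one_smul]; rfl)
  have hSβ : S β = β := by
    have h := B.constr_basis k ![(1 : L), (-1 : k) • α, (1 : k) • β,
      ((-1 : k) * (1 : k)) • (α * β)] (2 : Fin 4)
    rw [hBi 2] at h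
    simp only [Matrix.cons_val_two, Matrix.tail_cons, Matrix.head_cons] at h
    exact h.trans (one_smul k β)
  have hTmap : ∀ c : k, T (algebraMap k L c) = algebraMap k L c := fun c => by
    rw [Algebra.algebraMap_eq_smul_one, map_smul, hT1]
  have hSmap : ∀ c : k, S (algebraMap k L c) = algebraMap k L c := fun c => by
    rw [Algebra.algebraMap_eq_smul_one, map_smul, hS1]
  have hTT : ∀ z : L, T (T z) = z := by
    intro z
    obtain ⟨c0, c1, c2, c3, rfl⟩ := halg z
    simp only [map_add, hTmul, hTmap, hTα, hTβ, mul_neg, neg_mul, neg_neg, map_neg]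
  have hSS : ∀ z : L, S (S z) = z := by
    intro z
    obtain ⟨c0, c1, c2, c3, rfl⟩ := halg z
    simp only [map_add, hSmul, hSmap, hSα, hSβ, mul_neg, neg_mul, neg_neg, map_neg]
  have hTS : ∀ z : L, T (S z) = S (T z) := by
    intro z
    obtain ⟨c0, c1, c2, c3, rfl⟩ := halg z
    simp only [map_add, hTmul, hSmul, hTmap, hSmap, hTα, hTβ, hSα, hSβ, mul_neg, neg_mul,
      neg_neg, map_neg]
  have hTne : ∀ z : L, z ≠ 0 → T z ≠ 0 := by
    intro z hz h
    exact hz (by rw [← hTT z, h, map_zero])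
  have hSne : ∀ z : L, z ≠ 0 → S z ≠ 0 := by
    intro z hz h
    exact hz (by rw [← hSS z, h, map_zero])
  have hTinv : ∀ z : L, z ≠ 0 → T z⁻¹ = (T z)⁻¹ := by
    intro z hz
    refine eq_inv_of_mul_eq_one_left ?_
    rw [← hTmul, inv_mul_cancel₀ hz, hT1]
  have hSinv : ∀ z : L, z ≠ 0 → S z⁻¹ = (S z)⁻¹ := by
    intro z hz
    refine eq_inv_of_mul_eq_one_left ?_
    rw [← hSmul, inv_mul_cancel₀ hz, hS1]
  -- the subgroup of u with N_{L/k(α)}(u) ∈ {S(m)/m : m a norm from L to k(α)}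
  let K : Subgroup Lˣ :=
    { carrier := {u : Lˣ | ∃ x : Lˣ, (u : L) * T u * ((x : L) * T x) = S ((x : L) * T x)}
      one_mem' := ⟨1, by simp [hT1, hS1]⟩
      mul_mem' := by
        rintro u v ⟨x, hx⟩ ⟨y, hy⟩
        refine ⟨x * y, ?_⟩
        simp only [Units.val_mul, hTmul, hSmul] at hx hy ⊢
        linear_combination ((v : L) * T v * ((y : L) * T y)) * hx
          + (S (x : L) * S (T (x : L))) * hy
      inv_mem' := by
        rintro u ⟨x, hx⟩
        have hxne : (x : L) ≠ 0 := x.ne_zero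
        have hune : (u : L) ≠ 0 := u.ne_zero
        have hTxne : T (x : L) ≠ 0 := hTne _ hxne
        have hTune : T (u : L) ≠ 0 := hTne _ hune
        have hSxne : S (x : L) ≠ 0 := hSne _ hxne
        have hSTxne : S (T (x : L)) ≠ 0 := hSne _ hTxne
        refine ⟨Units.mk0 (S (x : L)) hSxne, ?_⟩
        simp only [Units.val_inv_eq_inv_val, Units.val_mk0]
        rw [hTinv _ hune, hTS, hSmul, hSS, hSS]
        simp only [hSmul] at hx
        field_simp
        linear_combination -hx }
  have hgensub : {w : Lˣ | ∃ (σ : L ≃ₐ[k] L) (x : Lˣ), (w : L) = σ x / x} ⊆ (K : Set Lˣ) := by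
    rintro w ⟨σ, x, hw⟩
    have hxne : (x : L) ≠ 0 := x.ne_zero
    have hTxne : T (x : L) ≠ 0 := hTne _ hxne
    have key : ∀ F : L → L, (∀ c : k, F (algebraMap k L c) = algebraMap k L c) →
        (∀ z w : L, F (z + w) = F z + F w) → (∀ z w : L, F (z * w) = F z * F w) →
        F α = σ α → F β = σ β → ∀ z, σ z = F z := by
      intro F hFmap hFadd hFmul hFα hFβ z
      have hz : z ∈ Algebra.adjoin k {α, β} := by rw [hgen]; trivial
      refine Algebra.adjoin_induction ?_ ?_ ?_ ?_ hz
      · rintro t (rfl | rfl)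
        · exact hFα.symm
        · exact hFβ.symm
      · intro r; rw [σ.commutes, hFmap]
      · intro z₁ z₂ _ _ h1 h2; rw [map_add, h1, h2, hFadd]
      · intro z₁ z₂ _ _ h1 h2; rw [map_mul, h1, h2, hFmul]
    have hσα : σ α = α ∨ σ α = -α := by
      apply mul_self_eq_mul_self_iff.mp
      calc σ α * σ α = σ (α * α) := (map_mul σ α α).symm
        _ = σ (α ^ 2) := by rw [sq]
        _ = algebraMap k L a := by rw [hα]; exact σ.commutes a
        _ = α * α := by rw [← hα]; ring
    have hσβ : σ β = β ∨ σ β = -β := by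
      apply mul_self_eq_mul_self_iff.mp
      calc σ β * σ β = σ (β * β) := (map_mul σ β β).symm
        _ = σ (β ^ 2) := by rw [sq]
        _ = algebraMap k L b := by rw [hβ]; exact σ.commutes b
        _ = β * β := by rw [← hβ]; ring
    rcases hσα with h1 | h1 <;> rcases hσβ with h2 | h2
    · -- σ = id
      have heq : ∀ z, σ z = z :=
        key id (fun c => rfl) (fun _ _ => rfl) (fun _ _ => rfl) h1.symm h2.symm
      have : w = 1 := Units.ext (by rw [hw, heq, div_self hxne, Units.val_one])
      rw [this]
      exact K.one_mem
    · -- σ = T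
      have heq : ∀ z, σ z = T z := by
        refine key T hTmap (fun z₁ z₂ => map_add T z₁ z₂) hTmul ?_ ?_
        · rw [hTα, h1]
        · rw [hTβ, h2]
      refine ⟨1, ?_⟩
      simp only [Units.val_one, one_mul, hT1, hS1, mul_one]
      rw [hw, heq, div_eq_mul_inv, hTmul, hTT, hTinv _ hxne]
      field_simp
    · -- σ = S
      have heq : ∀ z, σ z = S z := by
        refine key S hSmap (fun z₁ z₂ => map_add S z₁ z₂) hSmul ?_ ?_
        · rw [hSα, h1]
        · rw [hSβ, h2]
      refine ⟨x, ?_⟩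
      rw [hw, heq, div_eq_mul_inv, hTmul, hTinv _ hxne, hTS, hSmul]
      field_simp
    · -- σ = S ∘ T
      have heq : ∀ z, σ z = S (T z) := by
        refine key (fun z => S (T z))
          (fun c => by
            show S (T (algebraMap k L c)) = algebraMap k L c
            rw [hTmap, hSmap])
          (fun z₁ z₂ => by
            show S (T (z₁ + z₂)) = S (T z₁) + S (T z₂)
            rw [map_add, map_add])
          (fun z₁ z₂ => by
            show S (T (z₁ * z₂)) = S (T z₁) * S (T z₂)
            rw [hTmul, hSmul]) ?_ ?_
        · show S (T α) = σ α
          rw [hTα, hSα, h1]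
        · show S (T β) = σ β
          rw [hTβ, map_neg, hSβ, h2]
      refine ⟨x, ?_⟩
      rw [hw, heq, div_eq_mul_inv, hTmul, hTinv _ hxne, hTS, hTT, hSmul]
      field_simp
  have huK : u ∈ K := (Subgroup.closure_le K).mpr hgensub hmem
  obtain ⟨x, hx⟩ := huK
  have hxne : (x : L) ≠ 0 := x.ne_zero
  -- compute: u * T u = -1
  have hui : (u : L) * T (u : L) = -1 := by
    rw [hu, hTmap, ← map_mul, show i * i = -1 by linear_combination hi, map_neg, map_one]
  rw [hui, neg_one_mul] at hx
  -- coordinates of x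
  obtain ⟨c0, c1, c2, c3, hξ⟩ := halg (x : L)
  have hTαβ : T (α * β) = -(α * β) := by
    rw [hTmul, hTα, hTβ, mul_neg]
  have hTξ : T (x : L) = algebraMap k L c0 + algebraMap k L c1 * α - algebraMap k L c2 * β
      - algebraMap k L c3 * (α * β) := by
    rw [hξ]
    simp only [map_add, hTmul, hTmap, hTα, hTβ, hTαβ, mul_neg]
    ring
  have hm : (x : L) * T (x : L)
      = algebraMap k L (c0 ^ 2 + a * c1 ^ 2 - b * c2 ^ 2 - a * b * c3 ^ 2)
        + algebraMap k L (2 * (c0 * c1 - b * c2 * c3)) * α := by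
    rw [hTξ, hξ]
    simp only [map_add, map_sub, map_mul, map_pow, map_ofNat]
    linear_combination (algebraMap k L c1 ^ 2 - algebraMap k L c3 ^ 2 * β ^ 2) * hα
      + (-(algebraMap k L c2 ^ 2) - 2 * algebraMap k L c2 * algebraMap k L c3 * α
        - algebraMap k L c3 ^ 2 * algebraMap k L a) * hβ
  have hSm : S ((x : L) * T (x : L))
      = algebraMap k L (c0 ^ 2 + a * c1 ^ 2 - b * c2 ^ 2 - a * b * c3 ^ 2)
        - algebraMap k L (2 * (c0 * c1 - b * c2 * c3)) * α := by
    rw [hm]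
    simp only [map_add, hSmul, hSmap, hSα, mul_neg]
    ring
  rw [hSm, hm] at hx
  have h20 : (2 : L) * algebraMap k L (c0 ^ 2 + a * c1 ^ 2 - b * c2 ^ 2 - a * b * c3 ^ 2)
      = 0 := by linear_combination -hx
  have h2L : (2 : L) ≠ 0 := by
    intro h
    apply hchar
    apply hinj
    rw [map_ofNat, map_zero, h]
  have hE0 : c0 ^ 2 + a * c1 ^ 2 - b * c2 ^ 2 - a * b * c3 ^ 2 = 0 := by
    have := (mul_eq_zero.mp h20).resolve_left h2L
    apply hinj
    rw [this, map_zero]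
  obtain ⟨h0, h1, h2, h3⟩ := quad_aux a b haniso c0 c1 c2 c3 hE0
  apply hxne
  rw [hξ, h0, h1, h2, h3]
  simp
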